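/- Let n ≥ 2 be a natural number, a ≥ b > 0, θ = π/(2n), and k₀ = (√(a² + b² tan²θ) − a)/tan θ. If A₁, A₂ ∈ [b, a] and 0 < k ≤ k₀, then the complex number z = (A₁ + ik)(A₂ + ik) satisfies Re z ≥ b² − k² > 0 and 0 < Im z ≤ tan(π/(2n)) · Re z. -/

import Mathlib

open Real Complex

set_option maxHeartbeats 1600000 in
theorem stmt_2 (n : ℕ) (hn : 2 ≤ n) (a b : ℝ) (hab : b ≤ a) (hb : 0 < b)
    (θ k₀ : ℝ) (hθ : θ = π / (2 * n))
    (hk₀ : k₀ = (Real.sqrt (a ^ 2 + b ^ 2 * Real.tan θ ^ 2) - a) / Real.tan θ)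
    (A₁ A₂ k : ℝ) (hA₁ : A₁ ∈ Set.Icc b a) (hA₂ : A₂ ∈ Set.Icc b a)
    (hk : 0 < k) (hkk : k ≤ k₀)
    (z : ℂ) (hz : z = ((A₁ : ℂ) + Complex.I * k) * ((A₂ : ℂ) + Complex.I * k)) :
    (0 < b ^ 2 - k ^ 2 ∧ b ^ 2 - k ^ 2 ≤ z.re) ∧
      0 < z.im ∧ z.im ≤ Real.tan (π / (2 * n)) * z.re := by
  have ha : 0 < a := lt_of_lt_of_le hb hab
  obtain ⟨hA₁b, hA₁a⟩ := hA₁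
  obtain ⟨hA₂b, hA₂a⟩ := hA₂
  have hnpos : (0:ℝ) < (n:ℝ) := by positivity
  have hθpos : 0 < θ := by
    rw [hθ]; positivity
  have hθlt : θ < π / 2 := by
    rw [hθ]
    have h4 : (4:ℝ) ≤ 2 * n := by
      have : (2:ℝ) ≤ (n:ℝ) := by exact_mod_cast hn
      linarith
    calc π / (2 * n) ≤ π / 4 := by
          apply div_le_div_of_nonneg_left pi_pos.le (by norm_num) h4
      _ < π / 2 := by linarith [pi_pos]
  set t := Real.tan θ with ht_def
  have ht : 0 < t := Real.tan_pos_of_pos_of_lt_pi_div_two hθpos hθlt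
  -- key identity for k₀
  have hS : (0:ℝ) ≤ a ^ 2 + b ^ 2 * t ^ 2 := by positivity
  have hkt : k₀ * t + a = Real.sqrt (a ^ 2 + b ^ 2 * t ^ 2) := by
    rw [hk₀]; field_simp; ring
  have hs : (k₀ * t + a) ^ 2 = a ^ 2 + b ^ 2 * t ^ 2 := by
    rw [hkt, Real.sq_sqrt hS]
  have hk₀pos : 0 < k₀ := lt_of_lt_of_le hk hkk
  -- identity: t * (b^2 - k₀^2) = 2 * a * k₀
  have hid : t * (b ^ 2 - k₀ ^ 2) = 2 * a * k₀ := by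
    have h2 : t * (t * (b ^ 2 - k₀ ^ 2)) = t * (2 * a * k₀) := by
      linear_combination -hs
    exact mul_left_cancel₀ ht.ne' h2
  -- k₀ ≤ b * t
  have hk₀bt : k₀ ≤ b * t := by
    have h1 : (k₀ * t + a) ^ 2 ≤ (b * t ^ 2 + a) ^ 2 := by
      rw [hs]
      nlinarith [mul_nonneg (mul_nonneg hb.le (sq_nonneg t)) (by linarith : (0:ℝ) ≤ 2 * a - b),
        mul_nonneg (mul_nonneg hb.le (sq_nonneg t)) (mul_nonneg hb.le (sq_nonneg t))]
    have h2 : k₀ * t + a ≤ b * t ^ 2 + a := by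
      have hL : (0:ℝ) ≤ k₀ * t + a := by positivity
      have hR : (0:ℝ) ≤ b * t ^ 2 + a := by positivity
      nlinarith [h1]
    have h3 : k₀ * t ≤ (b * t) * t := by nlinarith [h2]
    exact le_of_mul_le_mul_right h3 ht
  -- k₀ < b
  have hk₀b : k₀ < b := by
    have h4 : 0 < b ^ 2 - k₀ ^ 2 := by
      have h5 : 0 < t * (b ^ 2 - k₀ ^ 2) := by
        rw [hid]; positivity
      rcases mul_pos_iff.mp h5 with ⟨-, h⟩ | ⟨h, -⟩
      · exact h
      · linarith
    exact lt_of_pow_lt_pow_left₀ 2 hb.le (by linarith)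
  have hkb : k < b := lt_of_le_of_lt hkk hk₀b
  -- g : 2*b*k ≤ t*(b^2 - k^2)
  have hg : 2 * b * k ≤ t * (b ^ 2 - k ^ 2) := by
    have key : t * (b ^ 2 - k ^ 2) - 2 * b * k =
        2 * (a - b) * k₀ + t * ((k₀ - k) * (k₀ + k)) + 2 * b * (k₀ - k) +
          (t * (b ^ 2 - k₀ ^ 2) - 2 * a * k₀) := by ring
    have e1 : 0 ≤ 2 * (a - b) * k₀ := mul_nonneg (by linarith) hk₀pos.le
    have e2 : 0 ≤ t * ((k₀ - k) * (k₀ + k)) :=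
      mul_nonneg ht.le (mul_nonneg (by linarith) (by linarith))
    have e3 : 0 ≤ 2 * b * (k₀ - k) := mul_nonneg (by linarith) (by linarith)
    linarith [key, hid, e1, e2, e3]
  have hre : z.re = A₁ * A₂ - k ^ 2 := by
    rw [hz]; simp [Complex.mul_re, Complex.mul_im]; ring
  have him : z.im = k * (A₁ + A₂) := by
    rw [hz]; simp [Complex.mul_re, Complex.mul_im]; ring
  have hktb : k ≤ b * t := le_trans hkk hk₀bt
  refine ⟨⟨by nlinarith [mul_pos (sub_pos.2 hkb) (by linarith : (0:ℝ) < b + k)], ?_⟩, ?_, ?_⟩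
  · rw [hre]
    have key1 : A₁ * A₂ - b ^ 2 =
        (A₁ - b) * (A₂ - b) + b * (A₁ - b) + b * (A₂ - b) := by ring
    linarith [key1, mul_nonneg (sub_nonneg.2 hA₁b) (sub_nonneg.2 hA₂b),
      mul_nonneg hb.le (sub_nonneg.2 hA₁b), mul_nonneg hb.le (sub_nonneg.2 hA₂b)]
  · rw [him]; exact mul_pos hk (by linarith)
  · rw [hre, him, ← hθ, ← ht_def]
    have h7 : k ≤ t * b := by linarith [hktb, (by ring : b * t = t * b)]
    have h6 : k ≤ t * A₁ := by
      have := mul_le_mul_of_nonneg_left hA₁b ht.le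
      linarith
    have key2 : t * (A₁ * A₂ - k ^ 2) - k * (A₁ + A₂) =
        (t * A₁ - k) * (A₂ - b) + (t * b - k) * (A₁ - b) +
          (t * (b ^ 2 - k ^ 2) - 2 * b * k) := by ring
    have e4 : 0 ≤ (t * A₁ - k) * (A₂ - b) :=
      mul_nonneg (by linarith) (by linarith)
    have e5 : 0 ≤ (t * b - k) * (A₁ - b) :=
      mul_nonneg (by linarith) (by linarith)
    linarith [key2, e4, e5, hg]
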